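/- Let A ∈ ℝ^{m×n}, b ∈ ℝ^m, let f(v) = (1/2)‖v − b‖₂², and let g(x) = ∑_{i=1}^n g_i(x_i) be an additively separable regularizer with g_i : ℝ → ℝ. Let P₁, …, P_K be a partition of the index set {1, …, n}, and for Δx ∈ ℝ^n let Δx_[k] ∈ ℝ^n denote the vector agreeing with Δx on P_k and zero elsewhere, so that Δx = ∑_{k=1}^K Δx_[k]. Set v = A x. Then the sum of the local subproblem values bounds the global objective at the updated point: f(A(x + Δx)) + g(x + Δx) ≤ ∑_{k=1}^K Γ_k(Δx_[k]; v, x), where Γ_k(Δx_[k]; v, x) = (1/K) f(v) + ⟨v − b, A Δx_[k]⟩ + (K/2)‖A Δx_[k]‖₂² + ∑_{i ∈ P_k} g_i(x_i + Δx_i). -/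

import Mathlib

open scoped RealInnerProductSpace

/-- Let `A ∈ ℝ^{m×n}`, `b ∈ ℝ^m`, `f(v) = (1/2)‖v − b‖₂²`, and `g(x) = ∑ g_i(x_i)` an
additively separable regularizer. Let `P₁, …, P_K` partition `{1,…,n}`, and for
`Δx ∈ ℝ^n` let `Δx_[k]` agree with `Δx` on `P_k` and be zero elsewhere. Set `v = A x`.
Then `f(A(x + Δx)) + g(x + Δx) ≤ ∑_k Γ_k(Δx_[k]; v, x)`, where
`Γ_k(Δx_[k]; v, x) = (1/K) f(v) + ⟨v − b, A Δx_[k]⟩ + (K/2)‖A Δx_[k]‖₂²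
 + ∑_{i ∈ P_k} g_i(x_i + Δx_i)`. -/
theorem stmt_10 (m n K : ℕ) (hK : 1 ≤ K)
    (A : Matrix (Fin m) (Fin n) ℝ) (b : EuclideanSpace ℝ (Fin m))
    (gi : Fin n → ℝ → ℝ)
    (P : Fin K → Finset (Fin n))
    (hPdisj : ∀ k l, k ≠ l → Disjoint (P k) (P l))
    (hPcover : ∀ i : Fin n, ∃ k, i ∈ P k)
    (x Δx : EuclideanSpace ℝ (Fin n))
    (Δxpart : Fin K → EuclideanSpace ℝ (Fin n))
    (hΔxpart : ∀ k i, Δxpart k i = if i ∈ P k then Δx i else 0)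
    (f : EuclideanSpace ℝ (Fin m) → ℝ)
    (hf : f = fun v => (1 / 2 : ℝ) * ‖v - b‖ ^ 2)
    (v : EuclideanSpace ℝ (Fin m)) (hv : v = Matrix.toEuclideanLin A x) :
    f (Matrix.toEuclideanLin A (x + Δx)) + ∑ i, gi i (x i + Δx i) ≤
      ∑ k, ((1 / (K : ℝ)) * f v + ⟪v - b, Matrix.toEuclideanLin A (Δxpart k)⟫
        + ((K : ℝ) / 2) * ‖Matrix.toEuclideanLin A (Δxpart k)‖ ^ 2
        + ∑ i ∈ P k, gi i (x i + Δx i)) := by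
  set T := Matrix.toEuclideanLin A with hT
  -- Δx is the sum of the pieces
  have hΔxsum : Δx = ∑ k, Δxpart k := by
    ext i
    obtain ⟨k₀, hk₀⟩ := hPcover i
    have : (∑ k, Δxpart k) i = ∑ k, Δxpart k i := by
      rw [WithLp.ofLp_sum]; exact Finset.sum_apply i Finset.univ _
    rw [this, Finset.sum_eq_single k₀]
    · rw [hΔxpart, if_pos hk₀]
    · intro k _ hk
      rw [hΔxpart]
      exact if_neg (fun hik => Finset.disjoint_left.mp (hPdisj k k₀ hk) hik hk₀)
    · intro h; exact absurd (Finset.mem_univ k₀) h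
  set w : Fin K → EuclideanSpace ℝ (Fin m) := fun k => T (Δxpart k) with hw
  have hTx : T (x + Δx) = (v - b) + b + ∑ k, w k := by
    rw [map_add, hv, hΔxsum, map_sum]
    abel
  -- g sum splits over the partition
  have hguniv : Finset.univ = Finset.univ.biUnion P := by
    ext i
    simp only [Finset.mem_univ, Finset.mem_biUnion, true_iff]
    obtain ⟨k, hk⟩ := hPcover i
    exact ⟨k, by simp, hk⟩
  have hg : ∑ i, gi i (x i + Δx i) = ∑ k, ∑ i ∈ P k, gi i (x i + Δx i) := by
    rw [hguniv, Finset.sum_biUnion]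
    intro k _ l _ hkl
    exact hPdisj k l hkl
  -- expand f at the new point
  have hfnew : f (T (x + Δx)) =
      (1 / 2) * ‖v - b‖ ^ 2 + ⟪v - b, ∑ k, w k⟫ + (1 / 2) * ‖∑ k, w k‖ ^ 2 := by
    rw [hf]
    simp only
    rw [hTx]
    have : (v - b) + b + ∑ k, w k - b = (v - b) + ∑ k, w k := by abel
    rw [this, norm_add_sq_real]
    ring
  -- quadratic bound
  have hKpos : (0 : ℝ) < K := by exact_mod_cast hK
  have hquad : (1 / 2) * ‖∑ k, w k‖ ^ 2 ≤ ∑ k, ((K : ℝ) / 2) * ‖w k‖ ^ 2 := by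
    have h1 : ‖∑ k, w k‖ ≤ ∑ k, ‖w k‖ := norm_sum_le _ _
    have h2 : ‖∑ k, w k‖ ^ 2 ≤ (∑ k, ‖w k‖) ^ 2 := by
      apply sq_le_sq' _ h1
      have := norm_nonneg (∑ k, w k)
      nlinarith [Finset.sum_nonneg (fun k (_ : k ∈ Finset.univ) => norm_nonneg (w k))]
    have h3 : (∑ k, ‖w k‖) ^ 2 ≤ (K : ℝ) * ∑ k, ‖w k‖ ^ 2 := by
      have := sq_sum_le_card_mul_sum_sq (s := Finset.univ) (f := fun k : Fin K => ‖w k‖)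
      simpa using this
    rw [← Finset.mul_sum]
    nlinarith
  -- assemble
  have hfv : ∑ k : Fin K, (1 / (K : ℝ)) * f v = f v := by
    rw [Finset.sum_const, Finset.card_univ, Fintype.card_fin, nsmul_eq_mul]
    field_simp
  have hinner : ⟪v - b, ∑ k, w k⟫ = ∑ k, ⟪v - b, w k⟫ := inner_sum _ _ _
  have hfveq : f v = (1 / 2) * ‖v - b‖ ^ 2 := by rw [hf]
  calc f (T (x + Δx)) + ∑ i, gi i (x i + Δx i)
      ≤ (1 / 2) * ‖v - b‖ ^ 2 + (∑ k, ⟪v - b, w k⟫) + (∑ k, ((K : ℝ) / 2) * ‖w k‖ ^ 2)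
          + ∑ k, ∑ i ∈ P k, gi i (x i + Δx i) := by
        rw [hfnew, hinner, hg]; linarith
    _ = ∑ k, ((1 / (K : ℝ)) * f v + ⟪v - b, w k⟫ + ((K : ℝ) / 2) * ‖w k‖ ^ 2
          + ∑ i ∈ P k, gi i (x i + Δx i)) := by
        rw [Finset.sum_add_distrib, Finset.sum_add_distrib, Finset.sum_add_distrib, hfv, hfveq]
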